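/- Let p, q ≥ 0 with p + q = 6, let ⟨·,·⟩ be the standard Hermitian form of signature (p,q) on ℂ⁶ (linear in the first argument, with ⟨v,w⟩ = Σ_{i≤p} vᵢ w̄ᵢ − Σ_{i>p} vᵢ w̄ᵢ), let γ be the induced Hermitian form on Λ³ℂ⁶ determined by γ(v₁∧v₂∧v₃, w₁∧w₂∧w₃) = det(⟨vᵢ,wⱼ⟩), let ν = e₁∧⋯∧e₆ for the standard basis, let Ω be the symplectic form on Λ³ℂ⁶ with v∧w = Ω(v,w)·ν, and let τ : Λ³ℂ⁶ → Λ³ℂ⁶ be the unique map satisfying γ(x,y) = i·Ω(x, τy) for all x, y. Then τ is antilinear, and τ∘τ = id if and only if p − q ≡ 0 (mod 4) (i.e., (p,q) ∈ {(5,1),(3,3),(1,5)}), while τ∘τ = −id otherwise (so τ is a real structure in the first case and a quaternionic structure in the second). Moreover, when p − q ≡ 0 (mod 4), the Hermitian form γ on Λ³ℂ⁶ has signature (10,10). -/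

import Mathlib

/-!
STATEMENT 15: Let `p + q = 6`, `⟨·,·⟩` the standard Hermitian form of signature `(p,q)` on
`ℂ⁶` (linear in the first argument), `γ` the induced Hermitian form on `Λ³ℂ⁶` with
`γ(v₁∧v₂∧v₃, w₁∧w₂∧w₃) = det(⟨vᵢ,wⱼ⟩)`, `Ω` the symplectic form on `Λ³ℂ⁶` with
`v∧w = Ω(v,w)·ν` for `ν = e₁∧⋯∧e₆`, and `τ` the unique map with `γ(x,y) = i·Ω(x,τy)`.
Then `τ` is antilinear, `τ∘τ = id` iff `p − q ≡ 0 (mod 4)` (and `τ∘τ = −id` otherwise),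
and when `p − q ≡ 0 (mod 4)` the Hermitian form `γ` has signature `(10,10)`.

`Λ³ℂ⁶` is realised as the third exterior power `⋀[ℂ]^3 ℂ⁶` inside the exterior algebra;
decomposable elements are given by `ExteriorAlgebra.ιMulti`.  `γ`, `Ω`, `τ` are
characterised by their defining properties (which determine them uniquely).
-/

noncomputable section

namespace Stmt15

abbrev A := ExteriorAlgebra ℂ (Fin 6 → ℂ)

/-- The third exterior power `Λ³ℂ⁶`. -/
abbrev W : Submodule ℂ A := ⋀[ℂ]^3 (Fin 6 → ℂ)

/-- The basis vectors `eᵢ` of `ℂ⁶` inside the exterior algebra. -/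
def e (i : Fin 6) : A := ExteriorAlgebra.ι ℂ (Pi.single i (1 : ℂ))

/-- `ν = e₁∧e₂∧e₃∧e₄∧e₅∧e₆`. -/
def ν : A := e 0 * e 1 * e 2 * e 3 * e 4 * e 5

/-- The standard Hermitian form of signature `(p,q)` on `ℂ⁶`,
`⟨v,w⟩ = Σ_{i<p} vᵢw̄ᵢ − Σ_{i≥p} vᵢw̄ᵢ` (0-indexed). -/
def h (p : ℕ) (v w : Fin 6 → ℂ) : ℂ :=
  ∑ i : Fin 6, (if (i : ℕ) < p then (1 : ℂ) else -1) * v i * (starRingEnd ℂ) (w i)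

end Stmt15

set_option maxRecDepth 100000
set_option maxHeartbeats 1000000

namespace Stmt15
-- aux
abbrev FI := {s : Finset (Fin 6) // s.card = 3}
def sIdx (S : FI) : Fin 3 → Fin 6 := fun i => S.1.orderIsoOfFin S.2 i
def wv (S : FI) : Fin 3 → (Fin 6 → ℂ) := fun i => Pi.single (sIdx S i) 1
def wS (S : FI) : A := ExteriorAlgebra.ιMulti ℂ 3 (wv S)
def std : Fin 6 → (Fin 6 → ℂ) := fun j => Pi.single j 1

lemma wS_mem (S : FI) : wS S ∈ W :=
  ExteriorAlgebra.ιMulti_range ℂ 3 ⟨wv S, rfl⟩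

def wW (S : FI) : W := ⟨wS S, wS_mem S⟩

lemma nu_eq : ν = ExteriorAlgebra.ιMulti ℂ 6 std := by
  rw [ExteriorAlgebra.ιMulti_apply]
  show ν = (List.ofFn fun i : Fin 6 => ExteriorAlgebra.ι ℂ (std i)).prod
  simp only [List.ofFn_succ, List.prod_cons, List.ofFn_zero, List.prod_nil, mul_one, ν, e, std, mul_assoc]
  rfl

def fam : ∀ i, (Fin 6 → ℂ) [⋀^Fin i]→ₗ[ℂ] ℂ :=
  Function.update (fun _ => 0) 6 Matrix.detRowAlternating
def Φ : A →ₗ[ℂ] ℂ := ExteriorAlgebra.liftAlternating fam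

lemma Φ_apply (v : Fin 6 → (Fin 6 → ℂ)) :
    Φ (ExteriorAlgebra.ιMulti ℂ 6 v) = Matrix.det (Matrix.of v) := by
  rw [Φ, ExteriorAlgebra.liftAlternating_apply_ιMulti, fam, Function.update_self]
  rfl

lemma nu_ne : ν ≠ 0 := by
  intro hν
  have : Φ ν = Matrix.det (Matrix.of std) := by rw [nu_eq, Φ_apply]
  rw [hν, map_zero] at this
  have hdet : Matrix.det (Matrix.of std) = 1 := by
    have : Matrix.of std = (1 : Matrix (Fin 6) (Fin 6) ℂ) := by
      ext i j
      rw [Matrix.of_apply, Matrix.one_apply]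
      simp [std, Pi.single_apply, eq_comm]
    rw [this, Matrix.det_one]
  rw [hdet] at this
  exact one_ne_zero this.symm

end Stmt15

namespace Stmt15
open ExteriorAlgebra

lemma iMulti_append (u v : Fin 3 → (Fin 6 → ℂ)) :
    ιMulti ℂ 3 u * ιMulti ℂ 3 v = ιMulti ℂ 6 (Fin.append u v) := by
  rw [ιMulti_apply, ιMulti_apply, ιMulti_apply, ← List.prod_append, ← List.ofFn_fin_append]
  congr 1

end Stmt15

namespace Stmt15
open ExteriorAlgebra

lemma iMulti_single_of_not_inj (g : Fin 6 → Fin 6) (hg : ¬ Function.Injective g) :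
    ιMulti ℂ 6 (fun i => (Pi.single (g i) 1 : Fin 6 → ℂ)) = (0 : A) := by
  simp only [Function.Injective, not_forall] at hg
  obtain ⟨i, j, hij, hne⟩ := hg
  exact (ιMulti ℂ 6).map_eq_zero_of_eq _ (by rw [hij]) hne

lemma iMulti_single_of_bij (g : Fin 6 → Fin 6) (hg : Function.Bijective g) :
    ιMulti ℂ 6 (fun i => Pi.single (g i) (1:ℂ))
      = (((Equiv.Perm.sign (Equiv.ofBijective g hg) : ℤ) : ℂ)) • ν := by
  have h1 : (fun i => Pi.single (g i) (1:ℂ)) = std ∘ (Equiv.ofBijective g hg) := rfl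
  rw [h1, (ιMulti ℂ 6).map_perm std (Equiv.ofBijective g hg), nu_eq,
    Units.smul_def, Int.cast_smul_eq_zsmul]

def cpl (S : FI) : FI := ⟨S.1ᶜ, by rw [Finset.card_compl, S.2]; rfl⟩

lemma cpl_cpl (S : FI) : cpl (cpl S) = S := Subtype.ext (by simp [cpl])

lemma sIdx_mem (S : FI) (i : Fin 3) : sIdx S i ∈ S.1 := (S.1.orderIsoOfFin S.2 i).2

lemma sIdx_surj (S : FI) {a : Fin 6} (ha : a ∈ S.1) : ∃ i, sIdx S i = a :=
  ⟨(S.1.orderIsoOfFin S.2).symm ⟨a, ha⟩, congrArg Subtype.val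
    ((S.1.orderIsoOfFin S.2).apply_symm_apply ⟨a, ha⟩)⟩

lemma sIdx_inj (S : FI) : Function.Injective (sIdx S) := fun i j h =>
  (S.1.orderIsoOfFin S.2).injective (Subtype.ext h)

lemma wS_mul (S T : FI) : wS S * wS T
    = ιMulti ℂ 6 (fun i => Pi.single (Fin.append (sIdx S) (sIdx T) i) (1:ℂ)) := by
  rw [wS, wS, iMulti_append]
  congr 1
  funext i
  refine Fin.addCases (motive := fun i => Fin.append (wv S) (wv T) i
    = Pi.single (Fin.append (sIdx S) (sIdx T) i) (1:ℂ)) ?_ ?_ i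
  · intro j; rw [Fin.append_left, Fin.append_left]; rfl
  · intro j; rw [Fin.append_right, Fin.append_right]; rfl

lemma wS_mul_eq_zero (S T : FI) (h : T ≠ cpl S) : wS S * wS T = 0 := by
  rw [wS_mul]
  apply iMulti_single_of_not_inj
  -- find common element
  have hST : ∃ a, a ∈ S.1 ∧ a ∈ T.1 := by
    by_contra hc
    push_neg at hc
    have hsub : T.1 ⊆ S.1ᶜ := fun a haT => Finset.mem_compl.2 (fun haS => hc a haS haT)
    have : T.1 = S.1ᶜ := Finset.eq_of_subset_of_card_le hsub
      (by rw [Finset.card_compl, S.2, T.2]; simp)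
    exact h (Subtype.ext this)
  obtain ⟨a, haS, haT⟩ := hST
  obtain ⟨i, hi⟩ := sIdx_surj S haS
  obtain ⟨j, hj⟩ := sIdx_surj T haT
  intro hinj
  have : Fin.append (sIdx S) (sIdx T) (Fin.castAdd 3 i)
       = Fin.append (sIdx S) (sIdx T) (Fin.natAdd 3 j) := by
    rw [Fin.append_left, Fin.append_right, hi, hj]
  have := hinj this
  have h2 : ((Fin.castAdd 3 i : Fin 6) : ℕ) = ((Fin.natAdd 3 j : Fin 6) : ℕ) := by rw [this]
  simp only [Fin.coe_castAdd, Fin.coe_natAdd] at h2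
  omega

end Stmt15

namespace Stmt15
open ExteriorAlgebra

def ρ : Equiv.Perm (Fin 6) := Equiv.addRight (3 : Fin 6)

lemma sign_ρ : Equiv.Perm.sign ρ = -1 := by decide

lemma append_flip (a b : Fin 3 → Fin 6) (i : Fin 6) :
    Fin.append a b (ρ i) = Fin.append b a i := by
  fin_cases i <;> rfl

end Stmt15

namespace Stmt15
open ExteriorAlgebra

lemma append_cpl_bij (S : FI) : Function.Bijective (Fin.append (sIdx S) (sIdx (cpl S))) := by
  rw [← Finite.surjective_iff_bijective]
  intro a
  by_cases ha : a ∈ S.1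
  · obtain ⟨i, hi⟩ := sIdx_surj S ha
    exact ⟨Fin.castAdd 3 i, by rw [Fin.append_left, hi]⟩
  · obtain ⟨i, hi⟩ := sIdx_surj (cpl S) (by simpa [cpl] using ha)
    exact ⟨Fin.natAdd 3 i, by rw [Fin.append_right, hi]⟩

lemma exists_sign (S : FI) : ∃ u : ℤˣ,
    wS S * wS (cpl S) = (((u:ℤ):ℂ)) • ν ∧ wS (cpl S) * wS S = ((-(u:ℤ) : ℤ):ℂ) • ν := by
  have hb := append_cpl_bij S
  refine ⟨Equiv.Perm.sign (Equiv.ofBijective _ hb), ?_, ?_⟩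
  · rw [wS_mul]; exact iMulti_single_of_bij _ hb
  · rw [wS_mul]
    have h1 : (fun i : Fin 6 => (Pi.single (Fin.append (sIdx (cpl S)) (sIdx S) i) 1 : Fin 6 → ℂ))
        = (fun i => (Pi.single (Fin.append (sIdx S) (sIdx (cpl S)) i) 1 : Fin 6 → ℂ)) ∘ ρ := by
      funext i; rw [Function.comp_apply, append_flip]
    rw [h1, (ιMulti ℂ 6 : (Fin 6 → ℂ) [⋀^Fin 6]→ₗ[ℂ] A).map_perm _ ρ, sign_ρ, iMulti_single_of_bij _ hb,
      Units.smul_def, Int.cast_smul_eq_zsmul, smul_smul, ← Int.cast_smul_eq_zsmul ℂ]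
    congr 1
    push_cast
    ring

end Stmt15

namespace Stmt15
open ExteriorAlgebra

def εz (p : ℕ) (S : FI) : ℂ := ∏ i ∈ S.1, (if (i:ℕ) < p then 1 else -1)

lemma h_single (p : ℕ) (a b : Fin 6) :
    h p (Pi.single a 1) (Pi.single b 1)
      = if a = b then (if (a:ℕ) < p then (1:ℂ) else -1) else 0 := by
  rw [h, Finset.sum_eq_single a]
  · by_cases hab : a = b
    · subst hab; simp [Pi.single_apply]
    · simp [Pi.single_apply, hab, Ne.symm hab]
  · intro i _ hia
    simp [Pi.single_apply, hia, Ne.symm hia]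
  · simp

lemma det_h (p : ℕ) (S T : FI) :
    Matrix.det (Matrix.of fun i j => h p (wv S i) (wv T j))
      = if S = T then εz p S else 0 := by
  by_cases hST : S = T
  · subst hST
    rw [if_pos rfl]
    have hdiag : (Matrix.of fun i j => h p (wv S i) (wv S j))
        = Matrix.diagonal (fun i => if ((sIdx S i : ℕ)) < p then (1:ℂ) else -1) := by
      ext i j
      rw [Matrix.of_apply, wv, wv, h_single]
      by_cases hij : i = j
      · subst hij; simp
      · have hne : sIdx S i ≠ sIdx S j := fun hc => hij (sIdx_inj S hc)
        rw [if_neg hne, Matrix.diagonal_apply_ne _ hij]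
    rw [hdiag, Matrix.det_diagonal, εz, ← Finset.prod_coe_sort S.1]
    exact Fintype.prod_equiv (S.1.orderIsoOfFin S.2).toEquiv _ _ (fun i => rfl)
  · rw [if_neg hST]
    have hnot : ∃ a, a ∈ S.1 ∧ a ∉ T.1 := by
      by_contra hc
      push_neg at hc
      exact hST (Subtype.ext (Finset.eq_of_subset_of_card_le hc (by rw [S.2, T.2])))
    obtain ⟨a, haS, haT⟩ := hnot
    obtain ⟨i, hi⟩ := sIdx_surj S haS
    apply Matrix.det_eq_zero_of_row_eq_zero i
    intro j
    rw [Matrix.of_apply, wv, wv, h_single, if_neg]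
    intro hc
    rw [hi] at hc
    exact haT (hc ▸ sIdx_mem T j)

lemma span_wS : (W : Submodule ℂ A) ≤ Submodule.span ℂ (Set.range wS) := by
  rw [show (W : Submodule ℂ A) = Submodule.span ℂ (Set.range (ιMulti ℂ 3))
    from (ExteriorAlgebra.ιMulti_span_fixedDegree ℂ 3).symm, Submodule.span_le]
  rintro _ ⟨v, rfl⟩
  have hv : (fun i => v i) = fun i => ∑ j : Fin 6, v i j • std j := by
    funext i k
    simp [std, Pi.single_apply, Finset.sum_ite_eq, mul_ite]
  have expand : ιMulti ℂ 3 v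
      = ∑ r : Fin 3 → Fin 6, (∏ i, v i (r i)) • ιMulti ℂ 3 (fun i => std (r i)) := by
    conv_lhs => rw [show v = (fun i => ∑ j : Fin 6, v i j • std j) from hv]
    rw [show (ιMulti ℂ 3 (fun i => ∑ j : Fin 6, v i j • std j))
      = (ιMulti ℂ 3).toMultilinearMap (fun i => ∑ j : Fin 6, v i j • std j) from rfl,
      MultilinearMap.map_sum]
    refine Finset.sum_congr rfl fun r _ => ?_
    exact MultilinearMap.map_smul_univ _ _ _
  rw [expand]
  apply Submodule.sum_mem
  intro r _
  apply Submodule.smul_mem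
  by_cases hr : Function.Injective r
  · -- r injective : image is a 3-subset
    set Sf : Finset (Fin 6) := Finset.image r Finset.univ with hSf
    have hcard : Sf.card = 3 := by
      rw [hSf, Finset.card_image_of_injective _ hr, Finset.card_univ, Fintype.card_fin]
    set S : FI := ⟨Sf, hcard⟩ with hS
    have hmem : ∀ i, r i ∈ Sf := fun i => Finset.mem_image_of_mem r (Finset.mem_univ i)
    set π : Fin 3 → Fin 3 := fun i => (Sf.orderIsoOfFin hcard).symm ⟨r i, hmem i⟩ with hπ
    have hπinj : Function.Injective π := by
      intro i j hij
      apply hr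
      have := congrArg (fun x => ((Sf.orderIsoOfFin hcard) x : Fin 6)) hij
      simpa [hπ] using this
    have hπbij : Function.Bijective π := (Finite.injective_iff_bijective).1 hπinj
    have hcomp : (fun i => std (r i)) = (wv S) ∘ (Equiv.ofBijective π hπbij) := by
      funext i
      show std (r i) = wv S (π i)
      rw [wv]
      have : sIdx S (π i) = r i := by
        show ((Sf.orderIsoOfFin hcard) ((Sf.orderIsoOfFin hcard).symm ⟨r i, hmem i⟩) : Fin 6) = r i
        rw [OrderIso.apply_symm_apply]
      rw [this]
      rfl
    rw [hcomp, (ιMulti ℂ 3 : (Fin 6 → ℂ) [⋀^Fin 3]→ₗ[ℂ] A).map_perm]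
    apply Submodule.smul_mem
    exact Submodule.subset_span ⟨S, rfl⟩
  · -- not injective: term is zero
    simp only [Function.Injective, not_forall] at hr
    obtain ⟨i, j, hij, hne⟩ := hr
    rw [(ιMulti ℂ 3).map_eq_zero_of_eq _ (by rw [hij]) hne]
    exact Submodule.zero_mem _

end Stmt15

namespace Stmt15
open ExteriorAlgebra

def negc (p : ℕ) (S : FI) : ℕ := (S.1.filter (fun i : Fin 6 => ¬ (i:ℕ) < p)).card

lemma εz_eq (p : ℕ) (S : FI) : εz p S = (-1 : ℂ)^(negc p S) := by
  rw [εz, ← Finset.prod_filter_mul_prod_filter_not S.1 (fun i => (i:ℕ) < p),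
    Finset.prod_congr rfl (fun i hi => if_pos (Finset.mem_filter.1 hi).2),
    Finset.prod_congr rfl (fun i hi => if_neg (Finset.mem_filter.1 hi).2),
    Finset.prod_const_one, Finset.prod_const, one_mul]
  rfl

lemma εz_sq (p : ℕ) (S : FI) : εz p S * εz p S = 1 := by
  rw [εz_eq, ← mul_pow]; norm_num

lemma εz_conj (p : ℕ) (S : FI) : (starRingEnd ℂ) (εz p S) = εz p S := by
  rw [εz_eq, map_pow, map_neg, map_one]

lemma card_filter_not_lt (p : ℕ) (hp : p ≤ 6) :
    (Finset.univ.filter (fun i : Fin 6 => ¬ (i:ℕ) < p)).card = 6 - p := by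
  interval_cases p <;> decide

lemma negc_add_cpl (p : ℕ) (S : FI) :
    negc p S + negc p (cpl S) = (Finset.univ.filter (fun i : Fin 6 => ¬ (i:ℕ) < p)).card := by
  have hc : (cpl S).1 = S.1ᶜ := rfl
  rw [negc, negc, hc, ← Finset.card_union_of_disjoint
    (Finset.disjoint_filter_filter (disjoint_compl_right)), ← Finset.filter_union,
    Finset.union_compl S.1]

lemma εz_mul_cpl (p q : ℕ) (hpq : p + q = 6) (S : FI) :
    εz p S * εz p (cpl S) = (-1:ℂ)^q := by
  rw [εz_eq, εz_eq, ← pow_add, negc_add_cpl, card_filter_not_lt p (by omega)]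
  congr 1
  omega

lemma cpl_inj : Function.Injective cpl := fun S T h => by
  rw [← cpl_cpl S, ← cpl_cpl T, h]

/-- generic sum helper: semilinear-type map to ℂ -/
lemma sum_hom_c {ι : Type*} (s : Finset ι) (f : W → ℂ) (σ : ℂ → ℂ)
    (hadd : ∀ a b : W, f (a + b) = f a + f b)
    (hsmul : ∀ (c : ℂ) (a : W), f (c • a) = σ c * f a)
    (hσ : σ 0 = 0)
    (c : ι → ℂ) (v : ι → W) :
    f (∑ i ∈ s, c i • v i) = ∑ i ∈ s, σ (c i) * f (v i) := by
  classical
  have h0 : f 0 = 0 := by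
    have := hsmul 0 0
    rw [smul_zero] at this
    rw [this, hσ, zero_mul]
  induction s using Finset.induction_on with
  | empty => simpa using h0
  | insert _ _ hx ih =>
    rw [Finset.sum_insert hx, Finset.sum_insert hx, hadd, hsmul, ih]

/-- generic sum helper: antilinear map W → W -/
lemma sum_hom_w {ι : Type*} (s : Finset ι) (f : W → W)
    (hadd : ∀ a b : W, f (a + b) = f a + f b)
    (hsmul : ∀ (c : ℂ) (a : W), f (c • a) = (starRingEnd ℂ) c • f a)
    (c : ι → ℂ) (v : ι → W) :
    f (∑ i ∈ s, c i • v i) = ∑ i ∈ s, (starRingEnd ℂ) (c i) • f (v i) := by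
  classical
  have h0 : f 0 = 0 := by
    have := hsmul 0 0
    rw [smul_zero] at this
    rw [this, map_zero, zero_smul]
  induction s using Finset.induction_on with
  | empty => simpa using h0
  | insert _ _ hx ih =>
    rw [Finset.sum_insert hx, Finset.sum_insert hx, hadd, hsmul, ih]

def S₀ : FI := ⟨{0,1,2}, by decide⟩

end Stmt15

namespace Stmt15

def posS (p : ℕ) : Finset FI := Finset.univ.filter (fun S => Even (negc p S))
def negS (p : ℕ) : Finset FI := Finset.univ.filter (fun S => ¬ Even (negc p S))

lemma card_posS (p : ℕ) (hp : p = 1 ∨ p = 3 ∨ p = 5) : (posS p).card = 10 := by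
  rcases hp with h|h|h <;> subst h <;> decide

lemma card_negS (p : ℕ) (hp : p = 1 ∨ p = 3 ∨ p = 5) : (negS p).card = 10 := by
  rcases hp with h|h|h <;> subst h <;> decide

end Stmt15


open Stmt15 in
theorem stmt15 (p q : ℕ) (hpq : p + q = 6)
    (γ : W → W → ℂ)
    (hγadd : ∀ x x' y : W, γ (x + x') y = γ x y + γ x' y)
    (hγsmul : ∀ (c : ℂ) (x y : W), γ (c • x) y = c * γ x y)
    (hγherm : ∀ x y : W, γ y x = (starRingEnd ℂ) (γ x y))
    (hγdet : ∀ (v w : Fin 3 → (Fin 6 → ℂ)) (x y : W),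
      (x : A) = ExteriorAlgebra.ιMulti ℂ 3 v → (y : A) = ExteriorAlgebra.ιMulti ℂ 3 w →
      γ x y = Matrix.det (Matrix.of fun i j => h p (v i) (w j)))
    (Ω : W → W → ℂ)
    (hΩ : ∀ x y : W, (x : A) * (y : A) = Ω x y • ν)
    (τ : W → W)
    (hτ : ∀ x y : W, γ x y = Complex.I * Ω x (τ y)) :
    ((∀ x y : W, τ (x + y) = τ x + τ y) ∧
     (∀ (c : ℂ) (x : W), τ (c • x) = (starRingEnd ℂ) c • τ x)) ∧
    ((∀ x : W, τ (τ x) = x) ↔ (4 : ℤ) ∣ ((p : ℤ) - (q : ℤ))) ∧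
    (¬ ((4 : ℤ) ∣ ((p : ℤ) - (q : ℤ))) → ∀ x : W, τ (τ x) = -x) ∧
    ((4 : ℤ) ∣ ((p : ℤ) - (q : ℤ)) →
      ∃ P N : Submodule ℂ W, Module.finrank ℂ P = 10 ∧ Module.finrank ℂ N = 10 ∧
        (∀ x : W, x ∈ P → x ≠ 0 → 0 < (γ x x).re) ∧
        (∀ x : W, x ∈ N → x ≠ 0 → (γ x x).re < 0)) := by
  classical
  have cancel : ∀ {a b : ℂ}, a • ν = b • ν → a = b := by
    intro a b hab
    have h1 : (a - b) • ν = 0 := by rw [sub_smul, hab, sub_self]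
    rcases smul_eq_zero.1 h1 with h | h
    · exact sub_eq_zero.1 h
    · exact absurd h nu_ne
  -- Ω bilinearity
  have Ω_addl : ∀ x x' y : W, Ω (x + x') y = Ω x y + Ω x' y := by
    intro x x' y
    apply cancel
    rw [← hΩ, add_smul, ← hΩ, ← hΩ, Submodule.coe_add, add_mul]
  have Ω_smull : ∀ (c : ℂ) (x y : W), Ω (c • x) y = c * Ω x y := by
    intro c x y
    apply cancel
    rw [← hΩ, Submodule.coe_smul, smul_mul_assoc, hΩ, smul_smul]
  have Ω_addr : ∀ x y y' : W, Ω x (y + y') = Ω x y + Ω x y' := by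
    intro x y y'
    apply cancel
    rw [← hΩ, add_smul, ← hΩ, ← hΩ, Submodule.coe_add, mul_add]
  have Ω_smulr : ∀ (c : ℂ) (x y : W), Ω x (c • y) = c * Ω x y := by
    intro c x y
    apply cancel
    rw [← hΩ, Submodule.coe_smul, mul_smul_comm, hΩ, smul_smul]
  have Ω_subr : ∀ (x y y' : W), Ω x (y - y') = Ω x y - Ω x y' := by
    intro x y y'
    have h1 : y - y' = y + (-1 : ℂ) • y' := by rw [neg_one_smul ℂ y', ← sub_eq_add_neg]
    rw [h1, Ω_addr, Ω_smulr]; ring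
  -- Ω basis values
  have Ωzero : ∀ S T : FI, T ≠ cpl S → Ω (wW S) (wW T) = 0 := by
    intro S T hT
    apply cancel
    rw [← hΩ, zero_smul]
    exact wS_mul_eq_zero S T hT
  choose u hu1 hu2 using exists_sign
  set g : FI → ℂ := fun S => ((u S : ℤ) : ℂ) with hgdef
  have Ωg : ∀ S, Ω (wW S) (wW (cpl S)) = g S := by
    intro S
    apply cancel
    rw [← hΩ]
    exact hu1 S
  have Ωgf : ∀ S, Ω (wW (cpl S)) (wW S) = - g S := by
    intro S
    apply cancel
    rw [← hΩ]
    refine (hu2 S).trans ?_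
    simp only [hgdef]
    push_cast
    rfl
  have gpm : ∀ S, g S = 1 ∨ g S = -1 := by
    intro S
    rcases Int.units_eq_one_or (u S) with hh | hh
    · left; rw [hgdef]; simp [hh]
    · right; rw [hgdef]; simp [hh]
  have g_sq : ∀ S, g S * g S = 1 := by
    intro S
    rcases gpm S with hh | hh <;> rw [hh] <;> norm_num
  have g_ne : ∀ S, g S ≠ 0 := by
    intro S
    rcases gpm S with hh | hh <;> rw [hh] <;> norm_num
  have g_conj : ∀ S, (starRingEnd ℂ) (g S) = g S := by
    intro S
    rcases gpm S with hh | hh <;> rw [hh] <;> simp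
  have g_cpl : ∀ S, g (cpl S) = - g S := by
    intro S
    have h1 := Ωg (cpl S)
    rw [cpl_cpl] at h1
    rw [← h1, Ωgf]
  have Ωb : ∀ T S' : FI, Ω (wW T) (wW S') = if S' = cpl T then g T else 0 := by
    intro T S'
    by_cases hh : S' = cpl T
    · rw [if_pos hh, hh, Ωg]
    · rw [if_neg hh, Ωzero T S' hh]
  -- γ values and semilinearity
  have γb : ∀ S T : FI, γ (wW S) (wW T) = if S = T then εz p S else 0 := by
    intro S T
    rw [hγdet (wv S) (wv T) (wW S) (wW T) rfl rfl, det_h]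
  have γ_addr : ∀ x y y' : W, γ x (y + y') = γ x y + γ x y' := by
    intro x y y'
    rw [hγherm (y + y') x, hγadd, map_add, ← hγherm, ← hγherm]
  have γ_smulr : ∀ (c : ℂ) (x y : W), γ x (c • y) = (starRingEnd ℂ) c * γ x y := by
    intro c x y
    rw [hγherm (c • y) x, hγsmul, map_mul, ← hγherm]
  -- representation
  have repr : ∀ x : W, ∃ c : FI → ℂ, x = ∑ S : FI, c S • wW S := by
    intro x
    have hx : (x : A) ∈ Submodule.span ℂ (Set.range wS) := span_wS x.2
    rw [Submodule.mem_span_range_iff_exists_fun] at hx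
    obtain ⟨c, hc⟩ := hx
    refine ⟨c, Subtype.ext ?_⟩
    rw [← hc]
    push_cast
    rfl
  -- nondegeneracy
  have ndg : ∀ y : W, (∀ x, Ω x y = 0) → y = 0 := by
    intro y hy
    obtain ⟨c, hc⟩ := repr y
    have hz : ∀ T, c T = 0 := by
      intro T
      have h0 := hy (wW (cpl T))
      rw [hc, sum_hom_c Finset.univ (fun z => Ω (wW (cpl T)) z) id
        (Ω_addr (wW (cpl T))) (fun cc a => Ω_smulr cc (wW (cpl T)) a) rfl c wW] at h0
      simp only [id] at h0
      rw [Finset.sum_eq_single T (by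
        intro S _ hST
        rw [Ωb, if_neg (by rw [cpl_cpl]; exact hST), mul_zero]) (by
        intro hT; exact absurd (Finset.mem_univ T) hT)] at h0
      rw [Ωb, if_pos (by rw [cpl_cpl])] at h0
      rcases mul_eq_zero.1 h0 with hh | hh
      · exact hh
      · exact absurd hh (g_ne (cpl T))
    rw [hc]
    exact Finset.sum_eq_zero fun S _ => by rw [hz, zero_smul]
  -- τ
  have Ωτ : ∀ x y, Ω x (τ y) = -Complex.I * γ x y := by
    intro x y
    have hh := hτ x y
    linear_combination Complex.I * hh + Ω x (τ y) * Complex.I_sq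
  have τb : ∀ S, τ (wW S) = (-Complex.I * εz p S * g S) • wW (cpl S) := by
    intro S
    have key : ∀ x : W, Ω x (τ (wW S) - (-Complex.I * εz p S * g S) • wW (cpl S)) = 0 := by
      intro x
      rw [Ω_subr, Ωτ, Ω_smulr, sub_eq_zero]
      obtain ⟨c, hc⟩ := repr x
      rw [hc, sum_hom_c Finset.univ (fun z => γ z (wW S)) id
        (fun a b => hγadd a b (wW S)) (fun cc a => hγsmul cc a (wW S)) rfl c wW,
        sum_hom_c Finset.univ (fun z => Ω z (wW (cpl S))) id
        (fun a b => Ω_addl a b (wW (cpl S))) (fun cc a => Ω_smull cc a (wW (cpl S))) rfl c wW,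
        Finset.mul_sum, Finset.mul_sum]
      refine Finset.sum_congr rfl fun T _ => ?_
      simp only [id]
      rw [γb, Ωb]
      by_cases hTS : T = S
      · subst hTS
        rw [if_pos rfl, if_pos rfl]
        linear_combination (Complex.I * εz p T * c T) * g_sq T
      · rw [if_neg hTS, if_neg (fun hh => hTS (cpl_inj hh).symm)]
        ring
    have h1 := ndg _ key
    rwa [sub_eq_zero] at h1
  have τ_add : ∀ x y, τ (x + y) = τ x + τ y := by
    intro x y
    have key : ∀ z, Ω z (τ (x + y) - (τ x + τ y)) = 0 := by
      intro z
      rw [Ω_subr, Ω_addr, Ωτ, Ωτ, Ωτ, γ_addr]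
      ring
    have h1 := ndg _ key
    rwa [sub_eq_zero] at h1
  have τ_smul : ∀ (c : ℂ) (x : W), τ (c • x) = (starRingEnd ℂ) c • τ x := by
    intro c x
    have key : ∀ z, Ω z (τ (c • x) - (starRingEnd ℂ) c • τ x) = 0 := by
      intro z
      rw [Ω_subr, Ω_smulr, Ωτ, Ωτ, γ_smulr]
      ring
    have h1 := ndg _ key
    rwa [sub_eq_zero] at h1
  -- τ ∘ τ
  have ττ : ∀ x : W, τ (τ x) = ((-1:ℂ)^(q+1)) • x := by
    intro x
    obtain ⟨c, hc⟩ := repr x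
    have ττb : ∀ S, τ (τ (wW S)) = ((-1:ℂ)^(q+1)) • wW S := by
      intro S
      rw [τb S, τ_smul, τb (cpl S), smul_smul, cpl_cpl]
      congr 1
      rw [map_mul, map_mul, εz_conj, g_conj, map_neg, Complex.conj_I, g_cpl, pow_succ]
      have h1 := εz_mul_cpl p q hpq S
      have h2 := g_sq S
      linear_combination (εz p S * εz p (cpl S) * g S * g S) * Complex.I_sq
        - (g S * g S) * h1 - ((-1:ℂ)^q) * h2
    rw [hc, sum_hom_w Finset.univ τ τ_add τ_smul c wW,
      sum_hom_w Finset.univ τ τ_add τ_smul (fun S => (starRingEnd ℂ) (c S))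
        (fun S => τ (wW S)), Finset.smul_sum]
    refine Finset.sum_congr rfl fun S _ => ?_
    rw [Complex.conj_conj, ττb S, smul_smul, smul_smul, mul_comm]
  -- wW nonzero
  have wW_ne : ∀ S, wW S ≠ 0 := by
    intro S hS
    have h2 := hu1 S
    have h0 : wS S = 0 := congrArg Subtype.val hS
    rw [h0, zero_mul, ← zero_smul ℂ ν] at h2
    have h3 := cancel h2
    have h4 : ((u S : ℤ) : ℂ) ≠ 0 := by
      simp only [ne_eq, Int.cast_eq_zero]
      exact Units.ne_zero (u S)
    exact h4 h3.symm
  have hdvd : ((4:ℤ) ∣ ((p:ℤ) - (q:ℤ))) ↔ q % 2 = 1 := by omega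
  refine ⟨⟨τ_add, τ_smul⟩, ?_, ?_, ?_⟩
  · constructor
    · intro hid
      rw [hdvd]
      by_contra hq
      have heven : Even q := Nat.even_iff.2 (by omega)
      have hpow : ((-1:ℂ))^(q+1) = -1 := Odd.neg_one_pow (Even.add_one heven)
      have h1 := ττ (wW S₀)
      rw [hid (wW S₀), hpow, neg_one_smul ℂ (wW S₀)] at h1
      have h2 : (2:ℂ) • wW S₀ = 0 := by
        rw [two_smul]
        nth_rewrite 1 [h1]
        rw [neg_add_cancel]
      have h5 : wW S₀ = 0 := by
        have h6 : ((2:ℂ)⁻¹ * 2) • wW S₀ = 0 := by rw [mul_smul, h2, smul_zero]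
        rwa [inv_mul_cancel₀ (two_ne_zero), one_smul] at h6
      exact wW_ne S₀ h5
    · intro hd x
      have hodd : Odd q := Nat.odd_iff.2 (hdvd.1 hd)
      have hpow : ((-1:ℂ))^(q+1) = 1 := Even.neg_one_pow (Odd.add_one hodd)
      rw [ττ, hpow, one_smul]
  · intro hd x
    have heven : Even q := Nat.even_iff.2 (by rw [hdvd] at hd; omega)
    have hpow : ((-1:ℂ))^(q+1) = -1 := Odd.neg_one_pow (Even.add_one heven)
    rw [ττ, hpow, neg_one_smul ℂ x]
  · intro hd
    have hq1 : q % 2 = 1 := hdvd.1 hd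
    have hp135 : p = 1 ∨ p = 3 ∨ p = 5 := by omega
    -- linear independence of the basis family
    have li : LinearIndependent ℂ wW := by
      rw [Fintype.linearIndependent_iff]
      intro c hc T
      have hA : (∑ S : FI, c S • wS S) = 0 := by
        have h2 := congrArg Subtype.val hc
        push_cast at h2
        exact h2
      have h3 := congrArg (fun z => z * wS (cpl T)) hA
      simp only [zero_mul] at h3
      rw [Finset.sum_mul, Finset.sum_eq_single T (by
          intro S _ hST
          rw [smul_mul_assoc, wS_mul_eq_zero S (cpl T) (fun hh => hST (cpl_inj hh).symm),
            smul_zero])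
        (fun hT => absurd (Finset.mem_univ T) hT)] at h3
      rw [smul_mul_assoc, hu1 T, smul_smul, ← zero_smul ℂ ν] at h3
      have h4 := cancel h3
      rcases mul_eq_zero.1 h4 with hh | hh
      · exact hh
      · exact absurd hh (by simp only [ne_eq, Int.cast_eq_zero]; exact Units.ne_zero (u T))
    -- quadratic form evaluation
    have γdiag : ∀ (s : Finset FI) (c : FI → ℂ),
        γ (∑ S ∈ s, c S • wW S) (∑ S ∈ s, c S • wW S)
          = ∑ S ∈ s, (Complex.normSq (c S) : ℂ) * εz p S := by
      intro s c
      rw [sum_hom_c s (fun z => γ z (∑ S ∈ s, c S • wW S)) id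
        (fun a b => hγadd a b _) (fun cc a => hγsmul cc a _) rfl c wW]
      simp only [id]
      refine Finset.sum_congr rfl fun S hS => ?_
      rw [sum_hom_c s (fun z => γ (wW S) z) (starRingEnd ℂ)
        (γ_addr (wW S)) (fun cc a => γ_smulr cc (wW S) a) (map_zero _) c wW]
      simp only [γb, mul_ite, mul_zero, mul_one]
      rw [Finset.sum_ite_eq s S (fun T => (starRingEnd ℂ) (c T) * εz p S), if_pos hS,
        ← mul_assoc, Complex.mul_conj]
    -- the two subspaces
    have li_pos : LinearIndependent ℂ (fun S : {S : FI // S ∈ posS p} => wW S.1) :=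
      li.comp Subtype.val Subtype.val_injective
    have li_neg : LinearIndependent ℂ (fun S : {S : FI // S ∈ negS p} => wW S.1) :=
      li.comp Subtype.val Subtype.val_injective
    refine ⟨Submodule.span ℂ (Set.range (fun S : {S : FI // S ∈ posS p} => wW S.1)),
      Submodule.span ℂ (Set.range (fun S : {S : FI // S ∈ negS p} => wW S.1)), ?_, ?_, ?_, ?_⟩
    · rw [finrank_span_eq_card li_pos, Fintype.card_coe, card_posS p hp135]
    · rw [finrank_span_eq_card li_neg, Fintype.card_coe, card_negS p hp135]
    · -- positive definite on P
      intro x hx hx0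
      obtain ⟨c, hc⟩ := Submodule.mem_span_range_iff_exists_fun ℂ |>.1 hx
      set c' : FI → ℂ := fun S => if hS : S ∈ posS p then c ⟨S, hS⟩ else 0 with hc'def
      have hxc : x = ∑ S ∈ posS p, c' S • wW S := by
        rw [← hc, ← Finset.sum_coe_sort (posS p) (fun S => c' S • wW S)]
        refine Finset.sum_congr rfl fun S _ => ?_
        simp only [hc'def]
        rw [dif_pos S.2]
      have hγxx : γ x x = ((∑ S ∈ posS p, Complex.normSq (c' S) : ℝ) : ℂ) := by
        rw [hxc, γdiag]
        push_cast
        refine Finset.sum_congr rfl fun S hS => ?_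
        have : εz p S = 1 := by
          rw [εz_eq]
          refine Even.neg_one_pow ?_
          simpa [posS, negc] using hS
        rw [this, mul_one]
      rw [hγxx, Complex.ofReal_re]
      have hex : ∃ S ∈ posS p, c' S ≠ 0 := by
        by_contra hall
        push_neg at hall
        apply hx0
        rw [hxc]
        exact Finset.sum_eq_zero fun S hS => by rw [hall S hS, zero_smul]
      obtain ⟨S1, hS1, hcS1⟩ := hex
      exact Finset.sum_pos' (fun S _ => Complex.normSq_nonneg _)
        ⟨S1, hS1, Complex.normSq_pos.2 hcS1⟩
    · -- negative definite on N
      intro x hx hx0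
      obtain ⟨c, hc⟩ := Submodule.mem_span_range_iff_exists_fun ℂ |>.1 hx
      set c' : FI → ℂ := fun S => if hS : S ∈ negS p then c ⟨S, hS⟩ else 0 with hc'def
      have hxc : x = ∑ S ∈ negS p, c' S • wW S := by
        rw [← hc, ← Finset.sum_coe_sort (negS p) (fun S => c' S • wW S)]
        refine Finset.sum_congr rfl fun S _ => ?_
        simp only [hc'def]
        rw [dif_pos S.2]
      have hγxx : γ x x = -((∑ S ∈ negS p, Complex.normSq (c' S) : ℝ) : ℂ) := by
        rw [hxc, γdiag]
        push_cast
        rw [← Finset.sum_neg_distrib]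
        refine Finset.sum_congr rfl fun S hS => ?_
        have : εz p S = -1 := by
          rw [εz_eq]
          refine Odd.neg_one_pow (Nat.not_even_iff_odd.1 ?_)
          simpa [negS, negc] using hS
        rw [this]
        ring
      rw [hγxx]
      have hex : ∃ S ∈ negS p, c' S ≠ 0 := by
        by_contra hall
        push_neg at hall
        apply hx0
        rw [hxc]
        exact Finset.sum_eq_zero fun S hS => by rw [hall S hS, zero_smul]
      obtain ⟨S1, hS1, hcS1⟩ := hex
      have hpos : 0 < ∑ S ∈ negS p, Complex.normSq (c' S) :=
        Finset.sum_pos' (fun S _ => Complex.normSq_nonneg _)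
          ⟨S1, hS1, Complex.normSq_pos.2 hcS1⟩
      simpa using hpos
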